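/- arXiv:2101.12525 — 2 statements merged into one kernel-verified Lean document; each statement's English description precedes it below -/
import Mathlib

section
/- Let A, X, W, Y be random variables where the score function is ψ(S; β, η) = (A - m_A(W)) (Y - m_Y(W) - (X - m_X(W))^T β) for nuisance parameter η = (m_A, m_X, m_Y). Let η⁰ = (m_A⁰, m_X⁰, m_Y⁰) where m_A⁰(W) = E[A|W], m_X⁰(W) = E[X|W], m_Y⁰(W) = E[Y|W]. Then for any β₀ and any nuisance parameter η with integrable components, the pathwise derivative d/dr E[ψ(S; β₀, η⁰ + r(η - η⁰))] evaluated at r = 0 equals 0 (Neyman orthogonality). -/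
open MeasureTheory
open ENNReal

section aux
variable {α : Type*} {m m0 : MeasurableSpace α} {μ : Measure α}

lemma aux_half : (1 : ℝ≥0∞) / 1 = 1 / 2 + 1 / 2 := by
  rw [div_one]; exact (ENNReal.add_halves 1).symm

lemma aux_int_mul {f g : α → ℝ} (hf : MemLp f 2 μ) (hg : MemLp g 2 μ) :
    Integrable (fun ω => f ω * g ω) μ := by
  rw [← memLp_one_iff_integrable]
  have h := hg.smul (r := 1) hf
  exact h

lemma aux_memLp2_condExp {E : Type*} [NormedAddCommGroup E] [InnerProductSpace ℝ E]
    [CompleteSpace E] (hm : m ≤ m0) [IsFiniteMeasure μ]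
    {f : α → E} (hf : MemLp f 2 μ) : MemLp (μ[f|m]) 2 μ := by
  haveI : SigmaFinite (μ.trim hm) := inferInstance
  set g : Lp E 2 μ := hf.toLp f with hg
  set h := (condExpL2 E ℝ hm g : Lp E 2 μ) with hh
  have hae : (h : α → E) =ᵐ[μ] μ[f|m] := by
    refine ae_eq_condExp_of_forall_setIntegral_eq hm (hf.integrable one_le_two)
      (fun s _ _ => ((Lp.memLp h).integrable one_le_two).integrableOn)
      (fun s hs hμs => ?_) ?_
    · rw [integral_condExpL2_eq hm g hs hμs.ne]
      exact setIntegral_congr_ae (hm s hs) (hf.coeFn_toLp.mono fun x hx _ => hx)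
    · exact lpMeas.aestronglyMeasurable (condExpL2 E ℝ hm g)
  exact (Lp.memLp h).ae_eq hae

lemma aux_condExp_clm {E F : Type*} [NormedAddCommGroup E] [NormedSpace ℝ E] [CompleteSpace E]
    [NormedAddCommGroup F] [NormedSpace ℝ F] [CompleteSpace F]
    (hm : m ≤ m0) [SigmaFinite (μ.trim hm)] (T : E →L[ℝ] F) {f : α → E}
    (hf : Integrable f μ) :
    (fun ω => T ((μ[f|m]) ω)) =ᵐ[μ] μ[(fun ω => T (f ω)) | m] := by
  refine ae_eq_condExp_of_forall_setIntegral_eq hm (T.integrable_comp hf)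
    (fun s _ _ => (T.integrable_comp integrable_condExp).integrableOn)
    (fun s hs hμs => ?_)
    ((T.continuous.comp_stronglyMeasurable stronglyMeasurable_condExp).aestronglyMeasurable)
  rw [T.integral_comp_comm integrable_condExp.integrableOn,
    setIntegral_condExp hm hf hs, T.integral_comp_comm hf.integrableOn]

lemma aux_orth (hm : m ≤ m0) [IsFiniteMeasure μ] {f g : α → ℝ}
    (hfm : StronglyMeasurable[m] f) (hf : MemLp f 2 μ) (hg : MemLp g 2 μ)
    (hg0 : μ[g|m] =ᵐ[μ] 0) : ∫ ω, f ω * g ω ∂μ = 0 := by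
  haveI : SigmaFinite (μ.trim hm) := inferInstance
  have hint : Integrable (f * g) μ := aux_int_mul hf hg
  have h1 : ∫ ω, f ω * g ω ∂μ = ∫ ω, (μ[f * g|m]) ω ∂μ := (integral_condExp hm).symm
  have h2 : (μ[f * g|m]) =ᵐ[μ] 0 := by
    refine (condExp_mul_of_stronglyMeasurable_left hfm hint (hg.integrable one_le_two)).trans ?_
    filter_upwards [hg0] with x hx
    simp [hx]
  rw [h1, integral_congr_ae h2]
  simp

end aux


theorem stmt10 {Ω β : Type*} [MeasurableSpace Ω] [MeasurableSpace β]
    {μ : Measure Ω} [IsProbabilityMeasure μ] {q d : ℕ}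
    {W : Ω → β} (hW : Measurable W)
    (A nA : Ω → EuclideanSpace ℝ (Fin q)) (X nX : Ω → EuclideanSpace ℝ (Fin d))
    (Y nY : Ω → ℝ)
    (hA : MemLp A 2 μ) (hX : MemLp X 2 μ) (hY : MemLp Y 2 μ)
    (hnA : MemLp nA 2 μ) (hnX : MemLp nX 2 μ) (hnY : MemLp nY 2 μ)
    (hmA : StronglyMeasurable[MeasurableSpace.comap W inferInstance] nA)
    (hmX : StronglyMeasurable[MeasurableSpace.comap W inferInstance] nX)
    (hmY : StronglyMeasurable[MeasurableSpace.comap W inferInstance] nY)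
    (β₀ : Fin d → ℝ)
    (mA0 : Ω → EuclideanSpace ℝ (Fin q))
    (hmA0 : mA0 = μ[A | MeasurableSpace.comap W inferInstance])
    (mX0 : Ω → EuclideanSpace ℝ (Fin d))
    (hmX0 : mX0 = μ[X | MeasurableSpace.comap W inferInstance])
    (mY0 : Ω → ℝ)
    (hmY0 : mY0 = μ[Y | MeasurableSpace.comap W inferInstance]) :
    HasDerivAt
      (fun r : ℝ => fun i : Fin q =>
        ∫ ω, (A ω i - ((1 - r) * mA0 ω i + r * nA ω i))
          * (Y ω - ((1 - r) * mY0 ω + r * nY ω)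
            - ∑ j, (X ω j - ((1 - r) * mX0 ω j + r * nX ω j)) * β₀ j) ∂μ)
      (0 : Fin q → ℝ) (0 : ℝ) := by
  set m := MeasurableSpace.comap W inferInstance with hmdef
  have hm := hW.comap_le
  haveI : SigmaFinite (μ.trim hm) := inferInstance
  -- L² of the conditional expectations
  have hmA0L : MemLp mA0 2 μ := by rw [hmA0]; exact aux_memLp2_condExp hm hA
  have hmX0L : MemLp mX0 2 μ := by rw [hmX0]; exact aux_memLp2_condExp hm hX
  have hmY0L : MemLp mY0 2 μ := by rw [hmY0]; exact aux_memLp2_condExp hm hY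
  -- components are in L²
  have hproj : ∀ {n : ℕ} (Z : Ω → EuclideanSpace ℝ (Fin n)), MemLp Z 2 μ → ∀ (j : Fin n),
      MemLp (fun ω => Z ω j) 2 μ := by
    intro n Z hZ j
    have h := (EuclideanSpace.proj j (𝕜 := ℝ)).comp_memLp' hZ
    exact h
  have ha2 : ∀ i, MemLp (fun ω => A ω i - mA0 ω i) 2 μ :=
    fun i => (hproj A hA i).sub (hproj mA0 hmA0L i)
  have hb2 : ∀ i, MemLp (fun ω => nA ω i - mA0 ω i) 2 μ :=
    fun i => (hproj nA hnA i).sub (hproj mA0 hmA0L i)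
  have hsumL2 : ∀ (Z : Ω → EuclideanSpace ℝ (Fin d)), MemLp Z 2 μ →
      MemLp (fun ω => ∑ j, (Z ω j - mX0 ω j) * β₀ j) 2 μ := by
    intro Z hZ
    have heq : (fun ω => ∑ j, (Z ω j - mX0 ω j) * β₀ j)
        = ∑ j : Fin d, fun ω => (Z ω j - mX0 ω j) * β₀ j := by
      funext ω; simp
    rw [heq]
    refine memLp_finset_sum' _ fun j _ => ?_
    have h := ((hproj Z hZ j).sub (hproj mX0 hmX0L j)).const_mul (β₀ j)
    exact h.ae_eq (Filter.Eventually.of_forall fun ω => mul_comm _ _)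
  have hc2 : MemLp (fun ω => Y ω - mY0 ω - ∑ j, (X ω j - mX0 ω j) * β₀ j) 2 μ :=
    (hY.sub hmY0L).sub (hsumL2 X hX)
  have he2 : MemLp (fun ω => nY ω - mY0 ω - ∑ j, (nX ω j - mX0 ω j) * β₀ j) 2 μ :=
    (hnY.sub hmY0L).sub (hsumL2 nX hnX)
  -- strong measurability w.r.t. m
  have hmA0SM : StronglyMeasurable[m] mA0 := by rw [hmA0]; exact stronglyMeasurable_condExp
  have hmX0SM : StronglyMeasurable[m] mX0 := by rw [hmX0]; exact stronglyMeasurable_condExp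
  have hmY0SM : StronglyMeasurable[m] mY0 := by rw [hmY0]; exact stronglyMeasurable_condExp
  have hprojSM : ∀ {n : ℕ} (Z : Ω → EuclideanSpace ℝ (Fin n)), StronglyMeasurable[m] Z →
      ∀ (j : Fin n), StronglyMeasurable[m] (fun ω => Z ω j) := by
    intro n Z hZ j
    have h := (EuclideanSpace.proj j (𝕜 := ℝ)).continuous.comp_stronglyMeasurable hZ
    simpa [Function.comp] using h
  have hbSM : ∀ i, StronglyMeasurable[m] (fun ω => nA ω i - mA0 ω i) :=
    fun i => (hprojSM nA hmA i).sub (hprojSM mA0 hmA0SM i)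
  have heSM : StronglyMeasurable[m]
      (fun ω => nY ω - mY0 ω - ∑ j, (nX ω j - mX0 ω j) * β₀ j) := by
    refine (hmY.sub hmY0SM).sub ?_
    exact Finset.stronglyMeasurable_fun_sum
      (f := fun (j : Fin d) => fun ω => (nX ω j - mX0 ω j) * β₀ j) Finset.univ
      (fun j _ => ((hprojSM nX hmX j).sub (hprojSM mX0 hmX0SM j)).mul_const (β₀ j))
  -- conditional expectations of centered variables vanish
  have hcond_comp : ∀ {n : ℕ} (Z mZ : Ω → EuclideanSpace ℝ (Fin n)), MemLp Z 2 μ →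
      mZ = μ[Z|m] → ∀ (j : Fin n), μ[(fun ω => Z ω j - mZ ω j)|m] =ᵐ[μ] 0 := by
    intro n Z mZ hZ hmZ j
    have hZj : Integrable (fun ω => Z ω j) μ := ((hproj Z hZ j)).integrable one_le_two
    have hmZL : MemLp mZ 2 μ := by rw [hmZ]; exact aux_memLp2_condExp hm hZ
    have hmZj : Integrable (fun ω => mZ ω j) μ := (hproj mZ hmZL j).integrable one_le_two
    have h1 : (fun ω => mZ ω j) =ᵐ[μ] μ[(fun ω => Z ω j)|m] := by
      have h := aux_condExp_clm hm (EuclideanSpace.proj j (𝕜 := ℝ))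
        (hZ.integrable one_le_two)
      rw [hmZ]
      simpa using h
    have hmZSM : StronglyMeasurable[m] (fun ω => mZ ω j) := by
      refine hprojSM mZ ?_ j
      rw [hmZ]; exact stronglyMeasurable_condExp
    have h2 : μ[(fun ω => Z ω j - mZ ω j)|m]
        =ᵐ[μ] μ[(fun ω => Z ω j)|m] - μ[(fun ω => mZ ω j)|m] := condExp_sub hZj hmZj m
    have h3 : μ[(fun ω => mZ ω j)|m] = fun ω => mZ ω j :=
      condExp_of_stronglyMeasurable (μ := μ) hm hmZSM hmZj
    filter_upwards [h2, h1] with ω hω2 hω1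
    simp only [Pi.sub_apply, Pi.zero_apply] at *
    rw [hω2, h3]
    show (μ[(fun ω => Z ω j)|m]) ω - mZ ω j = 0
    rw [hω1, sub_self]
  have hca0 : ∀ i, μ[(fun ω => A ω i - mA0 ω i)|m] =ᵐ[μ] 0 :=
    fun i => hcond_comp A mA0 hA hmA0 i
  -- conditional expectation of c vanishes
  have hc0 : μ[(fun ω => Y ω - mY0 ω - ∑ j, (X ω j - mX0 ω j) * β₀ j)|m] =ᵐ[μ] 0 := by
    have hYint : Integrable (fun ω => Y ω - mY0 ω) μ := (hY.sub hmY0L).integrable one_le_two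
    have hsumint : Integrable (fun ω => ∑ j, (X ω j - mX0 ω j) * β₀ j) μ :=
      (hsumL2 X hX).integrable one_le_two
    have h2 : μ[(fun ω => Y ω - mY0 ω - ∑ j, (X ω j - mX0 ω j) * β₀ j)|m]
        =ᵐ[μ] μ[(fun ω => Y ω - mY0 ω)|m] - μ[(fun ω => ∑ j, (X ω j - mX0 ω j) * β₀ j)|m] :=
      condExp_sub hYint hsumint m
    -- first part
    have hY0 : μ[(fun ω => Y ω - mY0 ω)|m] =ᵐ[μ] 0 := by
      have hYi : Integrable Y μ := hY.integrable one_le_two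
      have hmYi : Integrable mY0 μ := hmY0L.integrable one_le_two
      have ha : μ[(fun ω => Y ω - mY0 ω)|m] =ᵐ[μ] μ[Y|m] - μ[mY0|m] := condExp_sub hYi hmYi m
      have hb : μ[mY0|m] = mY0 := condExp_of_stronglyMeasurable (μ := μ) hm hmY0SM hmYi
      filter_upwards [ha] with ω hω
      simp only [Pi.sub_apply, Pi.zero_apply] at *
      rw [hω, hb, hmY0]
      ring
    -- second part
    have hsum0 : μ[(fun ω => ∑ j, (X ω j - mX0 ω j) * β₀ j)|m] =ᵐ[μ] 0 := by
      have heq : (fun ω => ∑ j, (X ω j - mX0 ω j) * β₀ j)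
          = ∑ j : Fin d, fun ω => (X ω j - mX0 ω j) * β₀ j := by
        funext ω; simp
      rw [heq]
      have hint : ∀ j : Fin d, j ∈ Finset.univ →
          Integrable (fun ω => (X ω j - mX0 ω j) * β₀ j) μ := by
        intro j _
        have h := (((hproj X hX j).sub (hproj mX0 hmX0L j)).const_mul (β₀ j)).integrable
          one_le_two
        exact h.congr (Filter.Eventually.of_forall fun ω => mul_comm _ _)
      refine (condExp_finset_sum hint m).trans ?_
      have hterm : ∀ j : Fin d, μ[(fun ω => (X ω j - mX0 ω j) * β₀ j)|m] =ᵐ[μ] 0 := by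
        intro j
        have hsmul : (fun ω => (X ω j - mX0 ω j) * β₀ j)
            = β₀ j • (fun ω => X ω j - mX0 ω j) := by
          funext ω; simp [mul_comm]
        rw [hsmul]
        refine (condExp_smul (β₀ j) _ m).trans ?_
        filter_upwards [hcond_comp X mX0 hX hmX0 j] with ω hω
        simp only [Pi.smul_apply, Pi.zero_apply, smul_eq_mul] at *
        rw [hω]; ring
      have : ∀ᵐ ω ∂μ, ∀ j : Fin d, (μ[(fun ω => (X ω j - mX0 ω j) * β₀ j)|m]) ω = 0 :=
        (ae_all_iff).2 fun j => hterm j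
      filter_upwards [this] with ω hω
      simp only [Finset.sum_apply, Pi.zero_apply]
      exact Finset.sum_eq_zero fun j _ => hω j
    filter_upwards [h2, hY0, hsum0] with ω h2ω hY0ω hs0ω
    simp only [Pi.sub_apply, Pi.zero_apply] at *
    rw [h2ω, hY0ω, hs0ω]; ring
  -- the two orthogonality relations
  have hQ1 : ∀ i, (∫ ω, (A ω i - mA0 ω i)
      * (nY ω - mY0 ω - ∑ j, (nX ω j - mX0 ω j) * β₀ j) ∂μ) = 0 := by
    intro i
    have hswap : (∫ ω, (A ω i - mA0 ω i)
        * (nY ω - mY0 ω - ∑ j, (nX ω j - mX0 ω j) * β₀ j) ∂μ)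
        = ∫ ω, (nY ω - mY0 ω - ∑ j, (nX ω j - mX0 ω j) * β₀ j) * (A ω i - mA0 ω i) ∂μ := by
      congr 1; funext ω; ring
    rw [hswap]
    exact aux_orth hm heSM he2 (ha2 i) (hca0 i)
  have hQ2 : ∀ i, (∫ ω, (nA ω i - mA0 ω i)
      * (Y ω - mY0 ω - ∑ j, (X ω j - mX0 ω j) * β₀ j) ∂μ) = 0 :=
    fun i => aux_orth hm (hbSM i) (hb2 i) hc2 hc0
  -- expand the function as a quadratic polynomial in r
  have key : (fun r : ℝ => fun i : Fin q =>
        ∫ ω, (A ω i - ((1 - r) * mA0 ω i + r * nA ω i))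
          * (Y ω - ((1 - r) * mY0 ω + r * nY ω)
            - ∑ j, (X ω j - ((1 - r) * mX0 ω j + r * nX ω j)) * β₀ j) ∂μ)
      = fun r : ℝ => fun i : Fin q =>
        (∫ ω, (A ω i - mA0 ω i) * (Y ω - mY0 ω - ∑ j, (X ω j - mX0 ω j) * β₀ j) ∂μ)
        + ((-r) * ∫ ω, (A ω i - mA0 ω i)
            * (nY ω - mY0 ω - ∑ j, (nX ω j - mX0 ω j) * β₀ j) ∂μ)
        + (((-r) * ∫ ω, (nA ω i - mA0 ω i)
            * (Y ω - mY0 ω - ∑ j, (X ω j - mX0 ω j) * β₀ j) ∂μ)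
          + ((r * r) * ∫ ω, (nA ω i - mA0 ω i)
            * (nY ω - mY0 ω - ∑ j, (nX ω j - mX0 ω j) * β₀ j) ∂μ)) := by
    funext r i
    have h1 := aux_int_mul (ha2 i) hc2
    have h2 := aux_int_mul (ha2 i) he2
    have h3 := aux_int_mul (hb2 i) hc2
    have h4 := aux_int_mul (hb2 i) he2
    have hptw : ∀ ω, (A ω i - ((1 - r) * mA0 ω i + r * nA ω i))
          * (Y ω - ((1 - r) * mY0 ω + r * nY ω)
            - ∑ j, (X ω j - ((1 - r) * mX0 ω j + r * nX ω j)) * β₀ j)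
        = (A ω i - mA0 ω i) * (Y ω - mY0 ω - ∑ j, (X ω j - mX0 ω j) * β₀ j)
          + ((-r) * ((A ω i - mA0 ω i)
              * (nY ω - mY0 ω - ∑ j, (nX ω j - mX0 ω j) * β₀ j))
            + ((-r) * ((nA ω i - mA0 ω i)
              * (Y ω - mY0 ω - ∑ j, (X ω j - mX0 ω j) * β₀ j))
              + (r * r) * ((nA ω i - mA0 ω i)
              * (nY ω - mY0 ω - ∑ j, (nX ω j - mX0 ω j) * β₀ j)))) := by
      intro ω
      have hsplit : ∑ j, (X ω j - ((1 - r) * mX0 ω j + r * nX ω j)) * β₀ j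
          = (∑ j, (X ω j - mX0 ω j) * β₀ j) - r * ∑ j, (nX ω j - mX0 ω j) * β₀ j := by
        rw [Finset.mul_sum, ← Finset.sum_sub_distrib]
        exact Finset.sum_congr rfl fun j _ => by ring
      rw [hsplit]; ring
    calc (∫ ω, (A ω i - ((1 - r) * mA0 ω i + r * nA ω i))
          * (Y ω - ((1 - r) * mY0 ω + r * nY ω)
            - ∑ j, (X ω j - ((1 - r) * mX0 ω j + r * nX ω j)) * β₀ j) ∂μ)
        = ∫ ω, ((A ω i - mA0 ω i) * (Y ω - mY0 ω - ∑ j, (X ω j - mX0 ω j) * β₀ j)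
          + ((-r) * ((A ω i - mA0 ω i)
              * (nY ω - mY0 ω - ∑ j, (nX ω j - mX0 ω j) * β₀ j))
            + ((-r) * ((nA ω i - mA0 ω i)
              * (Y ω - mY0 ω - ∑ j, (X ω j - mX0 ω j) * β₀ j))
              + (r * r) * ((nA ω i - mA0 ω i)
              * (nY ω - mY0 ω - ∑ j, (nX ω j - mX0 ω j) * β₀ j))))) ∂μ := by
          congr 1; funext ω; exact hptw ω
      _ = _ := by
          have h2' : Integrable (fun ω => (-r) * ((A ω i - mA0 ω i)
              * (nY ω - mY0 ω - ∑ j, (nX ω j - mX0 ω j) * β₀ j))) μ := h2.const_mul _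
          have h3' : Integrable (fun ω => (-r) * ((nA ω i - mA0 ω i)
              * (Y ω - mY0 ω - ∑ j, (X ω j - mX0 ω j) * β₀ j))) μ := h3.const_mul _
          have h4' : Integrable (fun ω => (r * r) * ((nA ω i - mA0 ω i)
              * (nY ω - mY0 ω - ∑ j, (nX ω j - mX0 ω j) * β₀ j))) μ := h4.const_mul _
          have h34 : Integrable (fun ω => (-r) * ((nA ω i - mA0 ω i)
              * (Y ω - mY0 ω - ∑ j, (X ω j - mX0 ω j) * β₀ j))
              + (r * r) * ((nA ω i - mA0 ω i)
              * (nY ω - mY0 ω - ∑ j, (nX ω j - mX0 ω j) * β₀ j))) μ := h3'.add h4'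
          have h234 : Integrable (fun ω => (-r) * ((A ω i - mA0 ω i)
              * (nY ω - mY0 ω - ∑ j, (nX ω j - mX0 ω j) * β₀ j))
              + ((-r) * ((nA ω i - mA0 ω i)
              * (Y ω - mY0 ω - ∑ j, (X ω j - mX0 ω j) * β₀ j))
              + (r * r) * ((nA ω i - mA0 ω i)
              * (nY ω - mY0 ω - ∑ j, (nX ω j - mX0 ω j) * β₀ j)))) μ := h2'.add h34
          rw [integral_add h1 h234, integral_add h2' h34, integral_add h3' h4',
            integral_const_mul, integral_const_mul, integral_const_mul]
          ring
  rw [key]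
  refine hasDerivAt_pi.2 fun i => ?_
  rw [hQ1 i, hQ2 i]
  simp only [mul_zero, add_zero, zero_add, Pi.zero_apply]
  have h := ((hasDerivAt_id (0 : ℝ)).mul (hasDerivAt_id 0)).mul_const
    (∫ ω, (nA ω i - mA0 ω i)
      * (nY ω - mY0 ω - ∑ j, (nX ω j - mX0 ω j) * β₀ j) ∂μ)
  simpa [Pi.add_def] using (hasDerivAt_const (0 : ℝ)
    ((∫ ω, (A ω i - mA0 ω i) * (Y ω - mY0 ω - ∑ j, (X ω j - mX0 ω j) * β₀ j) ∂μ))).add h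
end

section
/- Let H, A, ε_W be independent standard normal random variables and W = A + H + ε_W. Then E[A · E[H | W]] = 1/3. In particular, even though A and H are independent, E[A·H - A·E[H|W]] = -1/3 ≠ 0. -/
open Real MeasureTheory ProbabilityTheory Filter Topology
open scoped ENNReal NNReal

lemma aux_integrable_exp_half : Integrable (fun x : ℝ => rexp (-(1/2) * x^2)) :=
  integrable_exp_neg_mul_sq (by norm_num)

lemma aux_integrable_mul_exp : Integrable (fun x : ℝ => x * rexp (-(1/2) * x^2)) := by
  have := integrable_rpow_mul_exp_neg_mul_sq (b := 1/2) (by norm_num) (s := 1) (by norm_num)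
  simpa using this

lemma aux_integrable_sq_exp : Integrable (fun x : ℝ => x^2 * rexp (-(1/2) * x^2)) := by
  have := integrable_rpow_mul_exp_neg_mul_sq (b := 1/2) (by norm_num) (s := 2) (by norm_num)
  have h2 : ∀ x : ℝ, x ^ (2:ℝ) = x ^ 2 := fun x => by
    rw [show (2:ℝ) = ((2:ℕ):ℝ) by norm_num, Real.rpow_natCast]
  simpa [h2] using this

lemma aux_tend_exp_top : Tendsto (fun x : ℝ => rexp (-(1/2) * x^2)) atTop (𝓝 0) := by
  have h := exp_neg_mul_sq_isLittleO_exp_neg (b := (1/2:ℝ)) (by norm_num)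
  exact h.isBigO.trans_tendsto (Real.tendsto_exp_atBot.comp tendsto_neg_atTop_atBot)

lemma aux_tend_exp_bot : Tendsto (fun x : ℝ => rexp (-(1/2) * x^2)) atBot (𝓝 0) := by
  have h := aux_tend_exp_top.comp tendsto_neg_atBot_atTop
  have : ((fun x : ℝ => rexp (-(1/2) * x^2)) ∘ Neg.neg) = fun x : ℝ => rexp (-(1/2) * x^2) := by
    funext x; simp [Function.comp]
  rwa [this] at h

lemma aux_tend_top : Tendsto (fun x : ℝ => x * rexp (-(1/2) * x^2)) atTop (𝓝 0) := by
  have h := rpow_mul_exp_neg_mul_sq_isLittleO_exp_neg (b := 1/2) (by norm_num) 1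
  have h' : (fun x : ℝ => x * rexp (-(1/2) * x^2)) =o[atTop] fun x => rexp (-(1/2) * x) := by
    simpa using h
  refine h'.isBigO.trans_tendsto ?_
  have : Tendsto (fun x : ℝ => -(1/2) * x) atTop atBot :=
    tendsto_id.const_mul_atTop_of_neg (by norm_num)
  exact Real.tendsto_exp_atBot.comp this

lemma aux_tend_bot : Tendsto (fun x : ℝ => x * rexp (-(1/2) * x^2)) atBot (𝓝 0) := by
  have h : Tendsto ((fun x : ℝ => -(x * rexp (-(1/2) * x^2))) ∘ Neg.neg) atBot (𝓝 0) := by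
    refine Tendsto.comp ?_ tendsto_neg_atBot_atTop
    simpa using aux_tend_top.neg
  have heq : ((fun x : ℝ => -(x * rexp (-(1/2) * x^2))) ∘ Neg.neg)
      = fun x : ℝ => x * rexp (-(1/2) * x^2) := by
    funext x; simp [Function.comp]
  rwa [heq] at h

lemma aux_integral_exp_half : ∫ x : ℝ, rexp (-(1/2) * x^2) = √(2*π) := by
  rw [integral_gaussian]
  rw [show π / (1/2) = 2 * π by ring]

lemma aux_hasDeriv1 (x : ℝ) : HasDerivAt (fun x : ℝ => -rexp (-(1/2) * x^2))
    (x * rexp (-(1/2) * x^2)) x := by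
  have h1 : HasDerivAt (fun x : ℝ => -(1/2) * x^2) (-(1/2) * (2 * x)) x := by
    simpa using ((hasDerivAt_pow 2 x).const_mul (-(1/2) : ℝ))
  have := (h1.exp).neg
  refine this.congr_deriv ?_
  ring_nf

lemma aux_integral_mul_exp : ∫ x : ℝ, x * rexp (-(1/2) * x^2) = 0 := by
  have h := integral_of_hasDerivAt_of_tendsto (m := (0:ℝ)) (n := (0:ℝ)) aux_hasDeriv1
    aux_integrable_mul_exp (by simpa using aux_tend_exp_bot.neg)
    (by simpa using aux_tend_exp_top.neg)
  simpa using h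

lemma aux_hasDeriv2 (x : ℝ) : HasDerivAt (fun x : ℝ => -x * rexp (-(1/2) * x^2))
    (x^2 * rexp (-(1/2) * x^2) - rexp (-(1/2) * x^2)) x := by
  have h1 : HasDerivAt (fun x : ℝ => -(1/2) * x^2) (-(1/2) * (2 * x)) x := by
    simpa using ((hasDerivAt_pow 2 x).const_mul (-(1/2) : ℝ))
  have h2 := (hasDerivAt_id x).neg.mul h1.exp
  refine h2.congr_deriv ?_
  simp only [Pi.neg_apply, id]
  ring

lemma aux_integral_sq_exp : ∫ x : ℝ, x^2 * rexp (-(1/2) * x^2) = √(2*π) := by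
  have hint : Integrable (fun x : ℝ => x^2 * rexp (-(1/2) * x^2) - rexp (-(1/2) * x^2)) :=
    aux_integrable_sq_exp.sub aux_integrable_exp_half
  have h := integral_of_hasDerivAt_of_tendsto (m := (0:ℝ)) (n := (0:ℝ)) aux_hasDeriv2
    hint (by simpa using aux_tend_bot.neg) (by simpa using aux_tend_top.neg)
  rw [integral_sub aux_integrable_sq_exp aux_integrable_exp_half, sub_zero] at h
  rw [sub_eq_zero] at h
  rw [h, aux_integral_exp_half]


lemma aux_pdf_eq : gaussianPDFReal 0 1 = fun x => (√(2*π))⁻¹ * rexp (-(1/2) * x^2) := by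
  funext x
  simp only [gaussianPDFReal, NNReal.coe_one, mul_one, sub_zero]
  congr 1
  ring_nf

lemma aux_gaussianReal_eq : gaussianReal 0 1
    = volume.withDensity (fun x => ((Real.toNNReal (gaussianPDFReal 0 1 x) : ℝ≥0) : ℝ≥0∞)) := by
  rw [gaussianReal_of_var_ne_zero _ one_ne_zero]
  rfl

lemma aux_meas_pdf : Measurable (fun x => Real.toNNReal (gaussianPDFReal 0 1 x)) :=
  (measurable_gaussianPDFReal 0 1).real_toNNReal

lemma aux_integral_nu (g : ℝ → ℝ) :
    ∫ x, g x ∂(gaussianReal 0 1) = ∫ x, gaussianPDFReal 0 1 x * g x := by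
  rw [aux_gaussianReal_eq, integral_withDensity_eq_integral_smul aux_meas_pdf g]
  congr 1; funext x
  rw [NNReal.smul_def, Real.coe_toNNReal _ (gaussianPDFReal_nonneg _ _ _)]
  rfl

lemma aux_integrable_nu_iff (g : ℝ → ℝ) :
    Integrable g (gaussianReal 0 1) ↔ Integrable (fun x => gaussianPDFReal 0 1 x * g x) := by
  rw [aux_gaussianReal_eq, integrable_withDensity_iff_integrable_smul aux_meas_pdf]
  constructor <;> intro h <;> refine h.congr (ae_of_all _ fun x => ?_) <;>
    simp only [NNReal.smul_def, Real.coe_toNNReal _ (gaussianPDFReal_nonneg _ _ _),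
      smul_eq_mul]

lemma aux_nu_int_id : Integrable (fun x : ℝ => x) (gaussianReal 0 1) := by
  rw [aux_integrable_nu_iff, aux_pdf_eq]
  have := aux_integrable_mul_exp.const_mul ((√(2*π))⁻¹)
  refine this.congr (ae_of_all _ fun x => ?_)
  ring

lemma aux_nu_int_sq : Integrable (fun x : ℝ => x^2) (gaussianReal 0 1) := by
  rw [aux_integrable_nu_iff, aux_pdf_eq]
  have := aux_integrable_sq_exp.const_mul ((√(2*π))⁻¹)
  refine this.congr (ae_of_all _ fun x => ?_)
  ring

lemma aux_sqrt_ne : (√(2*π)) ≠ 0 := by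
  positivity

lemma aux_nu_integral_id : ∫ x, x ∂(gaussianReal 0 1) = 0 := by
  rw [aux_integral_nu, aux_pdf_eq]
  have h : ∀ x : ℝ, (√(2*π))⁻¹ * rexp (-(1/2) * x^2) * x
      = (√(2*π))⁻¹ * (x * rexp (-(1/2) * x^2)) := fun x => by ring
  simp only [h]
  rw [integral_const_mul, aux_integral_mul_exp, mul_zero]
  
lemma aux_nu_integral_sq : ∫ x, x^2 ∂(gaussianReal 0 1) = 1 := by
  have : ∀ x : ℝ, (fun x => (√(2*π))⁻¹ * rexp (-(1/2) * x^2)) x * x^2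
      = (√(2*π))⁻¹ * (x^2 * rexp (-(1/2) * x^2)) := fun x => by ring
  rw [aux_integral_nu, aux_pdf_eq]
  simp only [this]
  rw [integral_const_mul, aux_integral_sq_exp, inv_mul_cancel₀ aux_sqrt_ne]


lemma aux_key {Ω : Type*} [MeasurableSpace Ω] {μ : Measure Ω} [IsProbabilityMeasure μ]
    {X Y : Ω → ℝ} (hX : Measurable X) (hY : Measurable Y) (hind : IndepFun X Y μ)
    {ρ : Measure ℝ} (hXlaw : μ.map X = gaussianReal 0 1) (hYlaw : μ.map Y = ρ)
    (g : ℝ → ℝ) (hg : Measurable g) :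
    ∫ ω, X ω * g (X ω + Y ω) ∂μ
      = ∫ p : ℝ × ℝ, p.1 * g (p.1 + p.2) ∂((gaussianReal 0 1).prod ρ) := by
  have hmap : μ.map (fun ω => (X ω, Y ω)) = (gaussianReal 0 1).prod ρ := by
    rw [← hXlaw, ← hYlaw]
    exact (indepFun_iff_map_prod_eq_prod_map_map hX.aemeasurable hY.aemeasurable).mp hind
  rw [← hmap, integral_map (hX.prodMk hY).aemeasurable]
  exact (measurable_fst.mul (hg.comp (measurable_fst.add measurable_snd))).aestronglyMeasurable

theorem stmt13 {Ω : Type*} [MeasurableSpace Ω]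
    {μ : Measure Ω} [IsProbabilityMeasure μ]
    (H A e : Ω → ℝ) (hH : Measurable H) (hA : Measurable A) (he : Measurable e)
    (hindep : iIndepFun ![H, A, e] μ)
    (hHlaw : μ.map H = gaussianReal 0 1)
    (hAlaw : μ.map A = gaussianReal 0 1)
    (helaw : μ.map e = gaussianReal 0 1) :
    (∫ ω, A ω *
        (μ[H | MeasurableSpace.comap (fun ω' => A ω' + H ω' + e ω') inferInstance]) ω ∂μ
      = 1 / 3)
    ∧
    (∫ ω, (A ω * H ω - A ω *
        (μ[H | MeasurableSpace.comap (fun ω' => A ω' + H ω' + e ω') inferInstance]) ω) ∂μ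
      = -(1 / 3)) := by
  set ν : Measure ℝ := gaussianReal 0 1 with hν
  set W : Ω → ℝ := fun ω => A ω + H ω + e ω with hWdef
  have hW : Measurable W := (hA.add hH).add he
  have hm : MeasurableSpace.comap W inferInstance ≤ _ := hW.comap_le
  have hfmeas : ∀ i, Measurable (![H, A, e] i) := by
    intro i; fin_cases i; exacts [hH, hA, he]
  -- pairwise independence
  have hHA : IndepFun H A μ := by
    have := hindep.indepFun (i := 0) (j := 1) (by decide)
    simpa using this
  have hAe : IndepFun A e μ := by
    have := hindep.indepFun (i := 1) (j := 2) (by decide)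
    simpa using this
  have hHe : IndepFun H e μ := by
    have := hindep.indepFun (i := 0) (j := 2) (by decide)
    simpa using this
  -- integrability of the basic variables
  have intH : Integrable H μ := by
    have h0 : Integrable (fun x : ℝ => x) (μ.map H) := hHlaw ▸ aux_nu_int_id
    exact (integrable_map_measure aestronglyMeasurable_id hH.aemeasurable).mp h0
  have intA : Integrable A μ := by
    have h0 : Integrable (fun x : ℝ => x) (μ.map A) := hAlaw ▸ aux_nu_int_id
    exact (integrable_map_measure aestronglyMeasurable_id hA.aemeasurable).mp h0
  have inte : Integrable e μ := by
    have h0 : Integrable (fun x : ℝ => x) (μ.map e) := helaw ▸ aux_nu_int_id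
    exact (integrable_map_measure aestronglyMeasurable_id he.aemeasurable).mp h0
  have intW : Integrable W μ := (intA.add intH).add inte
  -- independence of each variable from the sum of the two others
  have hH_S : IndepFun H (fun ω => A ω + e ω) μ := by
    have h1 : IndepFun (fun ω => (A ω, e ω)) H μ := by
      have := hindep.indepFun_prodMk hfmeas 1 2 0 (by decide) (by decide)
      simpa using this
    exact (h1.symm.comp measurable_id measurable_add :)
  have hA_S : IndepFun A (fun ω => H ω + e ω) μ := by
    have h1 : IndepFun (fun ω => (H ω, e ω)) A μ := by
      have := hindep.indepFun_prodMk hfmeas 0 2 1 (by decide) (by decide)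
      simpa using this
    exact (h1.symm.comp measurable_id measurable_add :)
  have he_S : IndepFun e (fun ω => A ω + H ω) μ := by
    have h1 : IndepFun (fun ω => (A ω, H ω)) e μ := by
      have := hindep.indepFun_prodMk hfmeas 1 0 2 (by decide) (by decide)
      simpa using this
    exact (h1.symm.comp measurable_id measurable_add :)
  -- the common law of pairwise sums
  set ρ : Measure ℝ := (ν.prod ν).map (fun p : ℝ × ℝ => p.1 + p.2) with hρ
  have law_sum : ∀ (X Y : Ω → ℝ), Measurable X → Measurable Y → IndepFun X Y μ →
      μ.map X = ν → μ.map Y = ν → μ.map (fun ω => X ω + Y ω) = ρ := by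
    intro X Y hX hY hind hXl hYl
    have hpair : μ.map (fun ω => (X ω, Y ω)) = ν.prod ν := by
      have h := (indepFun_iff_map_prod_eq_prod_map_map hX.aemeasurable hY.aemeasurable).mp hind
      rw [hXl, hYl] at h
      exact h
    rw [hρ, ← hpair, Measure.map_map measurable_add (hX.prodMk hY)]
    rfl
  have lawAe : μ.map (fun ω => A ω + e ω) = ρ := law_sum A e hA he hAe hAlaw helaw
  have lawHe : μ.map (fun ω => H ω + e ω) = ρ := law_sum H e hH he hHe hHlaw helaw
  have lawAH : μ.map (fun ω => A ω + H ω) = ρ := law_sum A H hA hH hHA.symm hAlaw hHlaw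
  -- the three symmetric integrals agree
  have symm3 : ∀ (g : ℝ → ℝ), Measurable g →
      (∫ ω, H ω * g (W ω) ∂μ = ∫ ω, A ω * g (W ω) ∂μ)
      ∧ (∫ ω, e ω * g (W ω) ∂μ = ∫ ω, A ω * g (W ω) ∂μ) := by
    intro g hg
    have e1 : ∫ ω, H ω * g (W ω) ∂μ = ∫ ω, H ω * g (H ω + (A ω + e ω)) ∂μ := by
      congr 1; funext ω; rw [show H ω + (A ω + e ω) = W ω by rw [hWdef]; ring]
    have e2 : ∫ ω, A ω * g (W ω) ∂μ = ∫ ω, A ω * g (A ω + (H ω + e ω)) ∂μ := by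
      congr 1; funext ω; rw [show A ω + (H ω + e ω) = W ω by rw [hWdef]; ring]
    have e3 : ∫ ω, e ω * g (W ω) ∂μ = ∫ ω, e ω * g (e ω + (A ω + H ω)) ∂μ := by
      congr 1; funext ω; rw [show e ω + (A ω + H ω) = W ω by rw [hWdef]; ring]
    rw [e1, e2, e3,
      aux_key (Y := fun ω => A ω + e ω) hH (hA.add he) hH_S hHlaw lawAe g hg,
      aux_key (Y := fun ω => H ω + e ω) hA (hH.add he) hA_S hAlaw lawHe g hg,
      aux_key (Y := fun ω => A ω + H ω) he (hA.add hH) he_S helaw lawAH g hg]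
    exact ⟨rfl, rfl⟩
  -- the conditional expectation is W/3
  haveI : SigmaFinite (μ.trim hm) := by
    have : IsFiniteMeasure (μ.trim hm) := isFiniteMeasure_trim hm
    infer_instance
  have hcond : (fun ω => W ω / 3) =ᵐ[μ] μ[H | MeasurableSpace.comap W inferInstance] := by
    refine ae_eq_condExp_of_forall_setIntegral_eq hm intH
      (fun s _ _ => (intW.div_const 3).integrableOn) ?_ ?_
    · rintro s ⟨t, ht, rfl⟩ _
      set g : ℝ → ℝ := t.indicator (fun _ => 1) with hg
      have hgmeas : Measurable g := measurable_const.indicator ht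
      have hind_eq : ∀ (X : Ω → ℝ), (W ⁻¹' t).indicator X = fun ω => X ω * g (W ω) := by
        intro X; funext ω
        by_cases hω : W ω ∈ t <;>
          simp [Set.indicator_apply, hg, hω, Set.mem_preimage]
      have hintmul : ∀ (X : Ω → ℝ), Measurable X → Integrable X μ →
          Integrable (fun ω => X ω * g (W ω)) μ := by
        intro X hXm hXi
        refine hXi.abs.mono' ((hXm.mul (hgmeas.comp hW)).aestronglyMeasurable)
          (ae_of_all _ fun ω => ?_)
        rw [Real.norm_eq_abs, abs_mul]
        by_cases hω : W ω ∈ t <;>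
          simp [hg, Set.indicator_apply, hω, abs_nonneg, le_refl]
      have h3 := symm3 g hgmeas
      have hsplit : ∫ ω, W ω * g (W ω) ∂μ = 3 * ∫ ω, H ω * g (W ω) ∂μ := by
        have : (fun ω => W ω * g (W ω))
            = fun ω => A ω * g (W ω) + H ω * g (W ω) + e ω * g (W ω) := by
          funext ω; rw [hWdef]; ring
        have i1 : Integrable (fun ω => A ω * g (W ω) + H ω * g (W ω)) μ :=
          (hintmul A hA intA).add (hintmul H hH intH)
        rw [this, integral_add i1 (hintmul e he inte),
          integral_add (hintmul A hA intA) (hintmul H hH intH), h3.1, h3.2]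
        ring
      rw [integral_indicator (hW ht) (f := fun ω => W ω / 3) |>.symm,
        integral_indicator (hW ht) (f := H) |>.symm, hind_eq, hind_eq]
      have : (fun ω => W ω / 3 * g (W ω)) = fun ω => (W ω * g (W ω)) / 3 := by
        funext ω; ring
      rw [this, integral_div, hsplit, h3.1]
      ring
    · refine StronglyMeasurable.aestronglyMeasurable ?_
      refine Measurable.stronglyMeasurable ?_
      have hWm : Measurable[MeasurableSpace.comap W inferInstance] W :=
        Measurable.of_comap_le le_rfl
      exact hWm.div_const 3
  -- second moments and cross moments
  have intAA : Integrable (fun ω => A ω * A ω) μ := by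
    have h0 : Integrable (fun x : ℝ => x^2) (μ.map A) := hAlaw ▸ aux_nu_int_sq
    have := (integrable_map_measure (measurable_id.pow_const 2).aestronglyMeasurable hA.aemeasurable).mp h0
    refine this.congr (ae_of_all _ fun ω => ?_)
    simp [Function.comp, sq]
  have intAH : Integrable (fun ω => A ω * H ω) μ := hHA.symm.integrable_mul intA intH
  have intAe : Integrable (fun ω => A ω * e ω) μ := hAe.integrable_mul intA inte
  have iAA : ∫ ω, A ω * A ω ∂μ = 1 := by
    have h0 : ∫ x, x^2 ∂(μ.map A) = 1 := by rw [hAlaw]; exact aux_nu_integral_sq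
    have h1 : ∫ x, x^2 ∂(μ.map A) = ∫ ω, (A ω)^2 ∂μ :=
      integral_map hA.aemeasurable ((measurable_id.pow_const 2).aestronglyMeasurable)
    rw [h1] at h0
    rw [← h0]
    congr 1; funext ω; rw [sq]
  have iA : ∫ ω, A ω ∂μ = 0 := by
    have h0 : ∫ x, x ∂(μ.map A) = 0 := by rw [hAlaw]; exact aux_nu_integral_id
    have h1 : ∫ x, x ∂(μ.map A) = ∫ ω, A ω ∂μ :=
      integral_map hA.aemeasurable aestronglyMeasurable_id
    rwa [h1] at h0
  have iH : ∫ ω, H ω ∂μ = 0 := by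
    have h0 : ∫ x, x ∂(μ.map H) = 0 := by rw [hHlaw]; exact aux_nu_integral_id
    have h1 : ∫ x, x ∂(μ.map H) = ∫ ω, H ω ∂μ :=
      integral_map hH.aemeasurable aestronglyMeasurable_id
    rwa [h1] at h0
  have ie : ∫ ω, e ω ∂μ = 0 := by
    have h0 : ∫ x, x ∂(μ.map e) = 0 := by rw [helaw]; exact aux_nu_integral_id
    have h1 : ∫ x, x ∂(μ.map e) = ∫ ω, e ω ∂μ :=
      integral_map he.aemeasurable aestronglyMeasurable_id
    rwa [h1] at h0
  have iAH : ∫ ω, A ω * H ω ∂μ = 0 := by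
    have h : ∫ ω, A ω * H ω ∂μ = (∫ ω, A ω ∂μ) * (∫ ω, H ω ∂μ) :=
      hHA.symm.integral_mul_eq_mul_integral intA.aestronglyMeasurable intH.aestronglyMeasurable
    rw [h, iA, zero_mul]
  have iAe : ∫ ω, A ω * e ω ∂μ = 0 := by
    have h : ∫ ω, A ω * e ω ∂μ = (∫ ω, A ω ∂μ) * (∫ ω, e ω ∂μ) :=
      hAe.integral_mul_eq_mul_integral intA.aestronglyMeasurable inte.aestronglyMeasurable
    rw [h, iA, zero_mul]
  -- ∫ A * (W/3)
  have intAW3 : Integrable (fun ω => A ω * (W ω / 3)) μ := by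
    have : (fun ω => A ω * (W ω / 3))
        = fun ω => (A ω * A ω + A ω * H ω + A ω * e ω) / 3 := by
      funext ω; rw [hWdef]; ring
    rw [this]
    exact ((intAA.add intAH).add intAe).div_const 3
  have iAW3 : ∫ ω, A ω * (W ω / 3) ∂μ = 1 / 3 := by
    have : (fun ω => A ω * (W ω / 3))
        = fun ω => (A ω * A ω + A ω * H ω + A ω * e ω) / 3 := by
      funext ω; rw [hWdef]; ring
    have i1 : Integrable (fun ω => A ω * A ω + A ω * H ω) μ := intAA.add intAH
    rw [this, integral_div, integral_add i1 intAe,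
      integral_add intAA intAH, iAA, iAH, iAe]
    norm_num
  -- transfer to conditional expectation
  have hcondAe : (fun ω => A ω * (W ω / 3)) =ᵐ[μ] fun ω => A ω * (μ[H | MeasurableSpace.comap W inferInstance]) ω := by
    filter_upwards [hcond] with ω hω
    rw [hω]
  have first : ∫ ω, A ω * (μ[H | MeasurableSpace.comap W inferInstance]) ω ∂μ = 1 / 3 := by
    rw [← integral_congr_ae hcondAe, iAW3]
  have intAcond : Integrable (fun ω => A ω * (μ[H | MeasurableSpace.comap W inferInstance]) ω) μ := intAW3.congr hcondAe
  constructor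
  · exact first
  · rw [integral_sub intAH intAcond, iAH, first]
    norm_num
end
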